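/- Define d(R) = T/ℓ − 1/s − C(R,ε)/f_cpu and φ(R) = (1/f_cpu)·g(1/(d(R)·R)) + (1/(R²·ε·e^{εR}))·f′(1/(d(R)·R)), where g(x) = f(x) − x·f′(x) and f′(x) = (N₀·ln 2/B)·2^{x/B}, and suppose d(R) > 0 for all R ∈ [1, R_max]. If two sensors have the same per-cycle compression energy q_c > 0 but channel gains h₁ ≥ h₂ > 0, and their compression ratios R₁, R₂ ∈ [1, R_max] satisfy φ(R₁) = q_c·h₁ and φ(R₂) = q_c·h₂, then R₁ ≤ R₂. -/

import Mathlib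

open Real Set

noncomputable def Dfun (T ℓ s ε fcpu : ℝ) (R : ℝ) : ℝ :=
  T / ℓ - 1 / s - (Real.exp (ε * R) - Real.exp ε) / fcpu

noncomputable def Phi (N0 B fcpu T ℓ s ε : ℝ) (R : ℝ) : ℝ :=
  (1 / fcpu) * (N0 * (Real.exp (Real.log 2 * ((Dfun T ℓ s ε fcpu R * R)⁻¹ / B)) - 1)
      - (Dfun T ℓ s ε fcpu R * R)⁻¹ *
        (N0 * Real.log 2 / B * Real.exp (Real.log 2 * ((Dfun T ℓ s ε fcpu R * R)⁻¹ / B))))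
  + (R ^ 2 * ε * Real.exp (ε * R))⁻¹ *
      (N0 * Real.log 2 / B * Real.exp (Real.log 2 * ((Dfun T ℓ s ε fcpu R * R)⁻¹ / B)))

lemma Phi_deriv_neg (N0 B fcpu T ℓ s ε : ℝ)
    (hN0 : 0 < N0) (hB : 0 < B) (hfcpu : 0 < fcpu) (hε : 0 < ε)
    (R : ℝ) (hR : 0 < R) (hD : 0 < Dfun T ℓ s ε fcpu R) :
    ∃ E, HasDerivAt (Phi N0 B fcpu T ℓ s ε) E R ∧ E < 0 := by
  set P := Dfun T ℓ s ε fcpu R with hP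
  set e := Real.exp (ε * R) with he
  have hepos : 0 < e := Real.exp_pos _
  have hQpos : 0 < P * R := mul_pos hD hR
  have hQ0 : P * R ≠ 0 := ne_of_gt hQpos
  have hbasepos : 0 < R ^ 2 * ε * e := by positivity
  -- derivative of exp (ε * R)
  have h1 : HasDerivAt (fun R : ℝ => ε * R) ε R := by
    simpa using (hasDerivAt_id R).const_mul ε
  have hexp : HasDerivAt (fun R : ℝ => Real.exp (ε * R)) (e * ε) R := by
    simpa [he] using h1.exp
  -- derivative of D
  set dD : ℝ := -(e * ε / fcpu) with hdD
  have hDd : HasDerivAt (Dfun T ℓ s ε fcpu) dD R := by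
    have h2 : HasDerivAt (fun R : ℝ => (Real.exp (ε * R) - Real.exp ε) / fcpu)
        (e * ε / fcpu) R := (hexp.sub_const _).div_const fcpu
    have h3 := (hasDerivAt_const R (T / ℓ - 1 / s)).sub h2
    exact h3.congr_deriv (by rw [hdD]; ring)
  -- derivative of Q = D * R
  set dQ : ℝ := dD * R + P with hdQ
  have hQ : HasDerivAt (fun R => Dfun T ℓ s ε fcpu R * R) dQ R := by
    exact (hDd.mul (hasDerivAt_id R)).congr_deriv (by rw [hdQ, hP]; simp)
  -- derivative of U = Q⁻¹
  set dU : ℝ := -dQ / (P * R) ^ 2 with hdU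
  have hU : HasDerivAt (fun R => (Dfun T ℓ s ε fcpu R * R)⁻¹) dU R := by
    exact hQ.inv hQ0
  set U : ℝ := (P * R)⁻¹ with hUdef
  -- derivative of W = exp (log 2 * (U / B))
  set W : ℝ := Real.exp (Real.log 2 * (U / B)) with hW
  set dW : ℝ := W * (Real.log 2 * (dU / B)) with hdW
  have hWd : HasDerivAt (fun R => Real.exp (Real.log 2 * ((Dfun T ℓ s ε fcpu R * R)⁻¹ / B)))
      dW R := by
    have h4 := ((hU.div_const B).const_mul (Real.log 2)).exp
    simpa only [hdW, ← hW] using h4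
  set c0 : ℝ := N0 * Real.log 2 / B with hc0
  -- term 1
  have ht1 : HasDerivAt
      (fun R => (1 / fcpu) * (N0 * (Real.exp (Real.log 2 * ((Dfun T ℓ s ε fcpu R * R)⁻¹ / B)) - 1)
        - (Dfun T ℓ s ε fcpu R * R)⁻¹ *
          (c0 * Real.exp (Real.log 2 * ((Dfun T ℓ s ε fcpu R * R)⁻¹ / B)))))
      ((1 / fcpu) * (N0 * dW - (dU * (c0 * W) + U * (c0 * dW)))) R := by
    exact (((hWd.sub_const 1).const_mul N0).sub (hU.mul (hWd.const_mul c0))).const_mul (1 / fcpu)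
  -- base = R^2 * ε * e and its inverse A
  set dbase : ℝ := 2 * R * ε * e + R ^ 2 * ε * (e * ε) with hdbase
  have hbase : HasDerivAt (fun R : ℝ => R ^ 2 * ε * Real.exp (ε * R)) dbase R := by
    have hR2 : HasDerivAt (fun R : ℝ => R ^ 2) (2 * R) R := by
      simpa using hasDerivAt_pow 2 R
    exact ((hR2.mul_const ε).mul hexp).congr_deriv (by rw [hdbase])
  set dA : ℝ := -dbase / (R ^ 2 * ε * e) ^ 2 with hdA
  have hA : HasDerivAt (fun R : ℝ => (R ^ 2 * ε * Real.exp (ε * R))⁻¹) dA R := by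
    exact hbase.inv (ne_of_gt hbasepos)
  set A : ℝ := (R ^ 2 * ε * e)⁻¹ with hAdef
  have ht2 : HasDerivAt
      (fun R => (R ^ 2 * ε * Real.exp (ε * R))⁻¹ *
        (c0 * Real.exp (Real.log 2 * ((Dfun T ℓ s ε fcpu R * R)⁻¹ / B))))
      (dA * (c0 * W) + A * (c0 * dW)) R := hA.mul (hWd.const_mul c0)
  refine ⟨(1 / fcpu) * (N0 * dW - (dU * (c0 * W) + U * (c0 * dW)))
      + (dA * (c0 * W) + A * (c0 * dW)), ?_, ?_⟩
  · exact ht1.add ht2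
  · -- sign analysis
    have hW0 : 0 < W := Real.exp_pos _
    have hlog2 : 0 < Real.log 2 := Real.log_pos (by norm_num)
    have hc0pos : 0 < c0 := by rw [hc0]; positivity
    have hEeq : (1 / fcpu) * (N0 * dW - (dU * (c0 * W) + U * (c0 * dW)))
        + (dA * (c0 * W) + A * (c0 * dW))
        = c0 * W * (Real.log 2 / B * (-(dQ ^ 2) / (P ^ 3 * R ^ 4 * ε * e)) + dA) := by
      rw [hdW, hdU, hdQ, hdD, hUdef, hAdef, hc0]
      field_simp
      ring
    rw [hEeq]
    have hdApos : dA < 0 := by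
      rw [hdA, hdbase]
      have : 0 < 2 * R * ε * e + R ^ 2 * ε * (e * ε) := by positivity
      have h2 : 0 < (R ^ 2 * ε * e) ^ 2 := by positivity
      exact div_neg_of_neg_of_pos (neg_lt_zero.mpr this) h2
    have hterm : Real.log 2 / B * (-(dQ ^ 2) / (P ^ 3 * R ^ 4 * ε * e)) ≤ 0 := by
      apply mul_nonpos_of_nonneg_of_nonpos (by positivity)
      apply div_nonpos_of_nonpos_of_nonneg (neg_nonpos.mpr (by positivity)) (by positivity)
    have : Real.log 2 / B * (-(dQ ^ 2) / (P ^ 3 * R ^ 4 * ε * e)) + dA < 0 :=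
      add_neg_of_nonpos_of_neg hterm hdApos
    exact mul_neg_of_pos_of_neg (by positivity) this

lemma Phi_strictAntiOn (N0 B fcpu T ℓ s ε Rmax : ℝ)
    (hN0 : 0 < N0) (hB : 0 < B) (hfcpu : 0 < fcpu) (hε : 0 < ε)
    (hdpos : ∀ R ∈ Icc 1 Rmax, 0 < Dfun T ℓ s ε fcpu R) :
    StrictAntiOn (Phi N0 B fcpu T ℓ s ε) (Icc 1 Rmax) := by
  apply strictAntiOn_of_deriv_neg (convex_Icc 1 Rmax)
  · intro R hR
    obtain ⟨E, hE, -⟩ := Phi_deriv_neg N0 B fcpu T ℓ s ε hN0 hB hfcpu hε R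
      (lt_of_lt_of_le zero_lt_one hR.1) (hdpos R hR)
    exact hE.continuousAt.continuousWithinAt
  · intro R hR
    rw [interior_Icc] at hR
    obtain ⟨E, hE, hEneg⟩ := Phi_deriv_neg N0 B fcpu T ℓ s ε hN0 hB hfcpu hε R
      (lt_trans zero_lt_one hR.1) (hdpos R ⟨le_of_lt hR.1, le_of_lt hR.2⟩)
    rw [hE.deriv]; exact hEneg

/-- If two sensors share the per-cycle compression energy `q_c` but have
channel gains `h₁ ≥ h₂ > 0`, and their compression ratios satisfy the
first-order optimality condition `φ(Rᵢ) = q_c hᵢ` of Problem P1-B, then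
`R₁ ≤ R₂`.  Here `f(x) = N₀(2^{x/B}−1)`, `f′(x) = (N₀ ln 2/B) 2^{x/B}`,
`g(x) = f(x) − x f′(x)`, `C(R,ε) = e^{εR} − e^{ε}`, and
`d(R) = T/ℓ − 1/s − C(R,ε)/f_cpu` is assumed positive on `[1, R_max]`. -/
theorem channel_gain_monotone_compression
    (N0 B fcpu s T ℓ ε Rmax : ℝ)
    (hN0 : 0 < N0) (hB : 0 < B)
    (hfcpu : 0 < fcpu) (hs : 0 < s) (hT : 0 < T) (hℓ : 0 < ℓ)
    (hε : 0 < ε) (hRmax : 1 ≤ Rmax)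
    (f' g d φ : ℝ → ℝ)
    (hf' : ∀ x, f' x = N0 * Real.log 2 / B * (2 : ℝ) ^ (x / B))
    (hg : ∀ x, g x = N0 * ((2 : ℝ) ^ (x / B) - 1) - x * f' x)
    (hd : ∀ R, d R = T / ℓ - 1 / s - (Real.exp (ε * R) - Real.exp ε) / fcpu)
    (hφ : ∀ R, φ R =
      (1 / fcpu) * g (1 / (d R * R))
        + (1 / (R ^ 2 * ε * Real.exp (ε * R))) * f' (1 / (d R * R)))
    (hdpos : ∀ R ∈ Icc 1 Rmax, 0 < d R)
    (qc h₁ h₂ R₁ R₂ : ℝ)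
    (hqc : 0 < qc) (hh₂ : 0 < h₂) (hh : h₁ ≥ h₂)
    (hR₁ : R₁ ∈ Icc 1 Rmax) (hR₂ : R₂ ∈ Icc 1 Rmax)
    (hopt₁ : φ R₁ = qc * h₁) (hopt₂ : φ R₂ = qc * h₂) :
    R₁ ≤ R₂ := by
  have hDd : d = Dfun T ℓ s ε fcpu := funext fun R => hd R
  have hdpos' : ∀ R ∈ Icc 1 Rmax, 0 < Dfun T ℓ s ε fcpu R := by
    intro R hR; rw [← hDd]; exact hdpos R hR
  have hφΦ : ∀ R, φ R = Phi N0 B fcpu T ℓ s ε R := by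
    intro R
    rw [hφ, hg, hf', hDd, Real.rpow_def_of_pos two_pos]
    simp only [Phi, one_div]
  by_contra hcon
  push_neg at hcon
  have hanti := Phi_strictAntiOn N0 B fcpu T ℓ s ε Rmax hN0 hB hfcpu hε hdpos'
  have hlt : Phi N0 B fcpu T ℓ s ε R₁ < Phi N0 B fcpu T ℓ s ε R₂ := hanti hR₂ hR₁ hcon
  rw [← hφΦ R₁, ← hφΦ R₂, hopt₁, hopt₂] at hlt
  have h5 : qc * h₂ ≤ qc * h₁ := mul_le_mul_of_nonneg_left hh (le_of_lt hqc)
  linarith
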